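/- Let C(L) = {z ∈ E : ‖z‖ < 1} \ ⋃{H(c,r) : c ∈ S, 0 < r < √2, Cap(c,r) ∩ L = ∅} be the hyperbolic convex hull of L in the ball model (the complement in the open unit ball of all hyperbolic half-spaces whose caps miss L). Then for every ε₀ ∈ (0,1), C(L) ∩ ⋃_{w∈Ω} H_w = ∅; equivalently, for every x ∈ Ω and every t ∈ (0,1) with t•x ∈ C(L), one has t ≤ f(x). In other words, the graph G separates the convex hull C(L) from Ω. (Lemma 1.4.) -/

import Mathlib

/-- The dome `H(w,r)`: the intersection of the open unit ball with the open ball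
centered at `(cos θ)⁻¹ • w` of radius `tan θ`, where `cos θ = 1 − r²/2`; its boundary
sphere meets the unit sphere orthogonally along `∂Cap(w,r)` (the hyperbolic
half-space over the cap `Cap(w,r)` in the ball model). -/
noncomputable def dome (n : ℕ) (w : EuclideanSpace ℝ (Fin (n + 1))) (r : ℝ) :
    Set (EuclideanSpace ℝ (Fin (n + 1))) :=
  Metric.ball 0 1 ∩
    Metric.ball ((1 - r ^ 2 / 2)⁻¹ • w)
      (Real.sqrt (1 - (1 - r ^ 2 / 2) ^ 2) / (1 - r ^ 2 / 2))

/-- The union `⋃_{w ∈ Ω} H_w` of the domes over the caps `B_w = Cap(w, ε₀·dist(w,L))`,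
`w ∈ Ω = S \ L`. -/
noncomputable def domeUnion (n : ℕ) (L : Set (EuclideanSpace ℝ (Fin (n + 1)))) (ε₀ : ℝ) :
    Set (EuclideanSpace ℝ (Fin (n + 1))) :=
  ⋃ w ∈ Metric.sphere (0 : EuclideanSpace ℝ (Fin (n + 1))) 1 \ L,
    dome n w (ε₀ * Metric.infDist w L)

/-- The graph function `f : Ω → (0,1]`,
`f(x) = inf({1} ∪ {t ∈ (0,1) : t•x ∈ ⋃_{w∈Ω} H_w})`; the invariant graph is
`G = {f(x)•x : x ∈ Ω} = ∂(⋃_{w∈Ω} H_w) ∩ B^{n+1}`. -/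
noncomputable def graphHeight (n : ℕ) (L : Set (EuclideanSpace ℝ (Fin (n + 1))))
    (ε₀ : ℝ) (x : EuclideanSpace ℝ (Fin (n + 1))) : ℝ :=
  sInf ({1} ∪ {t : ℝ | t ∈ Set.Ioo (0 : ℝ) 1 ∧ t • x ∈ domeUnion n L ε₀})

/-- The hyperbolic convex hull `C(L)` of `L ⊆ S` in the ball model: the complement
in the open unit ball of all hyperbolic half-spaces (domes) whose caps miss `L`. -/
noncomputable def hyperbolicConvexHull (n : ℕ) (L : Set (EuclideanSpace ℝ (Fin (n + 1)))) :
    Set (EuclideanSpace ℝ (Fin (n + 1))) :=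
  Metric.ball (0 : EuclideanSpace ℝ (Fin (n + 1))) 1 \
    ⋃ (c : EuclideanSpace ℝ (Fin (n + 1))) (r : ℝ)
      (_ : c ∈ Metric.sphere (0 : EuclideanSpace ℝ (Fin (n + 1))) 1 ∧
        0 < r ∧ r < Real.sqrt 2 ∧
        (Metric.sphere (0 : EuclideanSpace ℝ (Fin (n + 1))) 1 ∩ Metric.ball c r) ∩ L = ∅),
      dome n c r

/-- A dome with parameter `r ≥ √2` is empty (the formula gives a nonpositive radius). -/
lemma dome_empty_of_sqrt_two_le (n : ℕ) (w : EuclideanSpace ℝ (Fin (n + 1))) {r : ℝ}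
    (hr : Real.sqrt 2 ≤ r) : dome n w r = ∅ := by
  have h2 : (2:ℝ) ≤ r ^ 2 := by
    nlinarith [Real.sq_sqrt (by norm_num : (0:ℝ) ≤ 2), Real.sqrt_nonneg 2]
  have hκ : 1 - r ^ 2 / 2 ≤ 0 := by linarith
  have hrad : Real.sqrt (1 - (1 - r ^ 2 / 2) ^ 2) / (1 - r ^ 2 / 2) ≤ 0 :=
    div_nonpos_of_nonneg_of_nonpos (Real.sqrt_nonneg _) hκ
  unfold dome
  rw [Metric.ball_eq_empty.2 hrad, Set.inter_empty]

set_option maxHeartbeats 1000000 in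
/-- Star-shapedness of domes towards the boundary sphere: if `s • x` lies in a
dome (with `0 < r < √2`, `x, w` unit vectors) and `s ≤ t < 1`, then `t • x` lies
in the same dome. -/
lemma dome_star (n : ℕ) {x w : EuclideanSpace ℝ (Fin (n + 1))}
    (hx : ‖x‖ = 1) (hw : ‖w‖ = 1) {r s t : ℝ}
    (hr0 : 0 < r) (hr2 : r < Real.sqrt 2) (hs : 0 < s) (hst : s ≤ t) (ht : t < 1)
    (h : s • x ∈ dome n w r) : t • x ∈ dome n w r := by
  set κ : ℝ := 1 - r ^ 2 / 2 with hκdef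
  have hr2' : r ^ 2 < 2 := by
    nlinarith [Real.sq_sqrt (by norm_num : (0:ℝ) ≤ 2), Real.sqrt_nonneg 2, hr0.le]
  have hκ0 : 0 < κ := by simp only [hκdef]; linarith
  have hκ1 : κ < 1 := by simp only [hκdef]; nlinarith
  have hκne : κ ≠ 0 := ne_of_gt hκ0
  have hdome : dome n w r = Metric.ball 0 1 ∩
      Metric.ball (κ⁻¹ • w) (Real.sqrt (1 - κ ^ 2) / κ) := rfl
  rw [hdome] at h ⊢
  obtain ⟨h1, h2⟩ := h
  have ht0 : 0 < t := lt_of_lt_of_le hs hst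
  -- radius
  have hRpos : 0 < Real.sqrt (1 - κ ^ 2) / κ :=
    div_pos (Real.sqrt_pos.2 (by nlinarith)) hκ0
  have hRsq : (Real.sqrt (1 - κ ^ 2) / κ) ^ 2 = (1 - κ ^ 2) / κ ^ 2 := by
    rw [div_pow, Real.sq_sqrt (by nlinarith : (0:ℝ) ≤ 1 - κ ^ 2)]
  set p : ℝ := inner ℝ x w with hpdef
  clear_value κ p
  have expand : ∀ a : ℝ, 0 ≤ a → ‖a • x - κ⁻¹ • w‖ ^ 2 = a ^ 2 - 2 * (a * κ⁻¹ * p) + κ⁻¹ ^ 2 := by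
    intro a ha
    rw [@norm_sub_sq_real, norm_smul, norm_smul, real_inner_smul_left, real_inner_smul_right,
      hx, hw]
    simp only [Real.norm_eq_abs, mul_one]
    rw [sq_abs, sq_abs, ← hpdef]
    ring
  have hinv : κ * κ⁻¹ = 1 := mul_inv_cancel₀ hκne
  -- hypothesis squared
  have h2' : ‖s • x - κ⁻¹ • w‖ ^ 2 < (Real.sqrt (1 - κ ^ 2) / κ) ^ 2 := by
    have := Metric.mem_ball.1 h2
    rw [dist_eq_norm] at this
    exact pow_lt_pow_left₀ this (norm_nonneg _) (by norm_num)
  rw [expand s hs.le, hRsq] at h2'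
  -- key scalar inequality: κ * (s^2 + 1) < 2 * s * p
  have hkey : κ * (s ^ 2 + 1) < 2 * s * p := by
    have hm := mul_lt_mul_of_pos_left h2' (by positivity : (0:ℝ) < κ ^ 2)
    have hκ2 : κ ^ 2 * ((1 - κ ^ 2) / κ ^ 2) = 1 - κ ^ 2 := by
      field_simp
    have heq : κ ^ 2 * (s ^ 2 - 2 * (s * κ⁻¹ * p) + κ⁻¹ ^ 2)
        = κ ^ 2 * s ^ 2 - 2 * s * κ * p + 1 := by
      field_simp
    rw [heq, hκ2] at hm
    have h3 : κ * (κ * (s ^ 2 + 1)) < κ * (2 * s * p) := by nlinarith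
    exact (mul_lt_mul_iff_right₀ hκ0).1 h3
  have hkeyt : κ * (t ^ 2 + 1) < 2 * t * p := by
    -- from hkey, using (t - s)(s t - 1) ≤ 0 and p > κ
    have hp : κ < p := by nlinarith [sq_nonneg (s - 1)]
    nlinarith [mul_nonneg (sub_nonneg.2 hst) (sub_nonneg.2 (by nlinarith : s * t ≤ 1)),
      mul_pos hs ht0]
  constructor
  · rw [Metric.mem_ball, dist_zero_right, norm_smul, hx, Real.norm_eq_abs,
      abs_of_pos ht0]
    simpa using ht
  · rw [Metric.mem_ball, dist_eq_norm]
    have hgoal : ‖t • x - κ⁻¹ • w‖ ^ 2 < (Real.sqrt (1 - κ ^ 2) / κ) ^ 2 := by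
      rw [expand t ht0.le, hRsq]
      have hc : (0:ℝ) < κ ^ 2 := by positivity
      rw [← mul_lt_mul_iff_right₀ hc]
      have heq2 : κ ^ 2 * (t ^ 2 - 2 * (t * κ⁻¹ * p) + κ⁻¹ ^ 2)
          = κ ^ 2 * t ^ 2 - 2 * t * κ * p + 1 := by
        field_simp
      have hκ2 : κ ^ 2 * ((1 - κ ^ 2) / κ ^ 2) = 1 - κ ^ 2 := by field_simp
      rw [heq2, hκ2]
      nlinarith [mul_lt_mul_of_pos_left hkeyt hκ0]
    exact lt_of_pow_lt_pow_left₀ 2 hRpos.le hgoal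

/-- Lemma 1.4: the invariant graph `G` separates the hyperbolic convex hull `C(L)`
from `Ω`: for every `ε₀ ∈ (0,1)`, `C(L)` is disjoint from `⋃_{w∈Ω} H_w`;
equivalently, for every `x ∈ Ω` and `t ∈ (0,1)` with `t•x ∈ C(L)`, one has
`t ≤ f(x)`. -/
theorem convex_hull_below_graph (n : ℕ) (hn : 1 ≤ n)
    (L : Set (EuclideanSpace ℝ (Fin (n + 1))))
    (hLne : L.Nonempty) (hLclosed : IsClosed L)
    (hLsub : L ⊆ Metric.sphere (0 : EuclideanSpace ℝ (Fin (n + 1))) 1)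
    (hLproper : L ≠ Metric.sphere (0 : EuclideanSpace ℝ (Fin (n + 1))) 1) :
    ∀ ε₀ ∈ Set.Ioo (0 : ℝ) 1,
      hyperbolicConvexHull n L ∩ domeUnion n L ε₀ = ∅ ∧
      ∀ x ∈ Metric.sphere (0 : EuclideanSpace ℝ (Fin (n + 1))) 1 \ L,
        ∀ t ∈ Set.Ioo (0 : ℝ) 1,
          t • x ∈ hyperbolicConvexHull n L → t ≤ graphHeight n L ε₀ x := by
  rintro ε₀ ⟨hε0, hε1⟩
  -- facts about w ∈ Ω
  have hdpos : ∀ w ∈ Metric.sphere (0 : EuclideanSpace ℝ (Fin (n + 1))) 1 \ L,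
      0 < Metric.infDist w L := by
    rintro w ⟨hws, hwL⟩
    exact (hLclosed.notMem_iff_infDist_pos hLne).1 hwL
  have hcapL : ∀ w ∈ Metric.sphere (0 : EuclideanSpace ℝ (Fin (n + 1))) 1 \ L,
      (Metric.sphere (0 : EuclideanSpace ℝ (Fin (n + 1))) 1 ∩
        Metric.ball w (ε₀ * Metric.infDist w L)) ∩ L = ∅ := by
    intro w hw
    ext y
    simp only [Set.mem_inter_iff, Set.mem_empty_iff_false, iff_false, not_and]
    rintro ⟨hys, hyb⟩ hyL
    have h1 : Metric.infDist w L ≤ dist w y := Metric.infDist_le_dist_of_mem hyL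
    have h2 : dist y w < ε₀ * Metric.infDist w L := Metric.mem_ball.1 hyb
    rw [dist_comm] at h2
    nlinarith [hdpos w hw]
  -- main: any point of any dome in the union is not in the hull
  have hmain : ∀ z, z ∈ domeUnion n L ε₀ → z ∉ hyperbolicConvexHull n L := by
    intro z hz hhull
    simp only [domeUnion, Set.mem_iUnion, exists_prop] at hz
    obtain ⟨w, hw, hzd⟩ := hz
    simp only [hyperbolicConvexHull, Set.mem_diff, Set.mem_iUnion, not_exists] at hhull
    set r : ℝ := ε₀ * Metric.infDist w L with hrdef
    have hr0 : 0 < r := mul_pos hε0 (hdpos w hw)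
    by_cases hr2 : r < Real.sqrt 2
    · exact hhull.2 w r ⟨hw.1, hr0, hr2, hcapL w hw⟩ hzd
    · rw [dome_empty_of_sqrt_two_le n w (le_of_not_gt hr2)] at hzd
      exact hzd
  constructor
  · ext z
    simp only [Set.mem_inter_iff, Set.mem_empty_iff_false, iff_false, not_and]
    intro hhull hdu
    exact hmain z hdu hhull
  · rintro x ⟨hxs, hxL⟩ t ⟨ht0, ht1⟩ hthull
    have hlb : ∀ s ∈ ({1} ∪ {t : ℝ | t ∈ Set.Ioo (0 : ℝ) 1 ∧ t • x ∈ domeUnion n L ε₀}), t ≤ s := by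
      rintro s (hs | ⟨⟨hs0, hs1⟩, hsd⟩)
      · rw [Set.mem_singleton_iff] at hs; rw [hs]; exact ht1.le
      · by_contra hts
        push_neg at hts
        -- s < t, s•x in some dome; push up to t•x
        simp only [domeUnion, Set.mem_iUnion, exists_prop] at hsd
        obtain ⟨w, hw, hsd'⟩ := hsd
        simp only [hyperbolicConvexHull, Set.mem_diff, Set.mem_iUnion, not_exists] at hthull
        set r : ℝ := ε₀ * Metric.infDist w L with hrdef
        have hr0 : 0 < r := mul_pos hε0 (hdpos w hw)
        by_cases hr2 : r < Real.sqrt 2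
        · have hxnorm : ‖x‖ = 1 := by simpa using hxs
          have hwnorm : ‖w‖ = 1 := by simpa using hw.1
          have htd : t • x ∈ dome n w r :=
            dome_star n hxnorm hwnorm hr0 hr2 hs0 hts.le ht1 hsd'
          exact hthull.2 w r ⟨hw.1, hr0, hr2, hcapL w hw⟩ htd
        · rw [dome_empty_of_sqrt_two_le n w (le_of_not_gt hr2)] at hsd'
          exact hsd'
    exact le_csInf ⟨1, Set.mem_union_left _ rfl⟩ hlb
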